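/- arXiv:2503.07130 — 9 statements merged into one kernel-verified Lean document; each statement's English description precedes it below -/
import Mathlib

section
/- For any sets of cliques x, y ⊆ Coh(G), the implication satisfies x↓ → y↓ = (x↓ → y↓)↓ = x → y↓; in particular the implication of two observations is again an observation. -/
/-- A set of vertices is a clique when its elements are pairwise coherent. -/
def IsClique {V : Type*} (coh : V → V → Prop) (x : Set V) : Prop :=
  ∀ a ∈ x, ∀ b ∈ x, coh a b

/-- The coherence space: the set of cliques of the graph. -/
def Coh {V : Type*} (coh : V → V → Prop) : Set (Set V) :=
  {x | IsClique coh x}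

/-- Down-closure (w.r.t. superset, within cliques) of a set of cliques. -/
def dcl {V : Type*} (coh : V → V → Prop) (x : Set (Set V)) : Set (Set V) :=
  {α | IsClique coh α ∧ ∃ β ∈ x, β ⊆ α}

/-- An observation: a down-closed set of cliques. -/
def IsObs {V : Type*} (coh : V → V → Prop) (x : Set (Set V)) : Prop :=
  x ⊆ Coh coh ∧ ∀ α β : Set V, β ∈ x → β ⊆ α → IsClique coh α → α ∈ x

/-- Heyting implication of sets of cliques. -/
def oimpl {V : Type*} (coh : V → V → Prop) (x y : Set (Set V)) : Set (Set V) :=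
  {α | IsClique coh α ∧ ∀ β ∈ x, IsClique coh (α ∪ β) → α ∪ β ∈ y}

lemma clique_mono {V : Type*} (coh : V → V → Prop) {a b : Set V}
    (h : a ⊆ b) (hb : IsClique coh b) : IsClique coh a :=
  fun p hp q hq => hb p (h hp) q (h hq)

lemma dcl_obs {V : Type*} (coh : V → V → Prop) (x : Set (Set V)) :
    IsObs coh (dcl coh x) := by
  constructor
  · intro α hα; exact hα.1
  · rintro α β ⟨hβc, γ, hγ, hγβ⟩ hβα hα
    exact ⟨hα, γ, hγ, hγβ.trans hβα⟩

lemma obs_impl {V : Type*} (coh : V → V → Prop) (u v : Set (Set V))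
    (hu : IsObs coh u) (hv : IsObs coh v) : IsObs coh (oimpl coh u v) := by
  constructor
  · intro α hα; exact hα.1
  · rintro α β ⟨hβc, hβ⟩ hβα hα
    refine ⟨hα, fun γ hγ hc => ?_⟩
    have h1 : IsClique coh (β ∪ γ) :=
      clique_mono coh (Set.union_subset_union_left γ hβα) hc
    exact hv.2 _ _ (hβ γ hγ h1) (Set.union_subset_union_left γ hβα) hc

theorem impl_closure {V : Type*} (coh : V → V → Prop)
    (hsymm : ∀ a b, coh a b → coh b a) (hrefl : ∀ a, coh a a)
    (x y : Set (Set V)) (hx : x ⊆ Coh coh) (hy : y ⊆ Coh coh) :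
    oimpl coh (dcl coh x) (dcl coh y) = dcl coh (oimpl coh (dcl coh x) (dcl coh y)) ∧
    oimpl coh (dcl coh x) (dcl coh y) = oimpl coh x (dcl coh y) ∧
    (∀ u v : Set (Set V), IsObs coh u → IsObs coh v → IsObs coh (oimpl coh u v)) := by
  have hobs : IsObs coh (oimpl coh (dcl coh x) (dcl coh y)) :=
    obs_impl coh _ _ (dcl_obs coh x) (dcl_obs coh y)
  refine ⟨?_, ?_, fun u v hu hv => obs_impl coh u v hu hv⟩
  · apply Set.Subset.antisymm
    · intro α hα; exact ⟨hα.1, α, hα, subset_rfl⟩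
    · rintro α ⟨hαc, β, hβ, hβα⟩
      exact hobs.2 α β hβ hβα hαc
  · apply Set.Subset.antisymm
    · rintro α ⟨hαc, hα⟩
      refine ⟨hαc, fun β hβ hc => hα β ⟨hx hβ, β, hβ, subset_rfl⟩ hc⟩
    · rintro α ⟨hαc, hα⟩
      refine ⟨hαc, ?_⟩
      rintro β ⟨hβc, γ, hγ, hγβ⟩ hc
      have h1 : IsClique coh (α ∪ γ) :=
        clique_mono coh (Set.union_subset_union_right α hγβ) hc
      obtain ⟨-, δ, hδ, hδγ⟩ := hα γ hγ h1
      exact ⟨hc, δ, hδ, hδγ.trans (Set.union_subset_union_right α hγβ)⟩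
end

section
/- Obs(G) with union, intersection, ∅, Coh(G), and the implication x → y := {α | ∀β ∈ x, α ∪ β ∈ Coh ⇒ α ∪ β ∈ y} is a Heyting algebra; i.e. for all observations x, y, z: x ∩ y ⊆ z if and only if x ⊆ (y → z). -/
theorem obs_heyting {V : Type*} (coh : V → V → Prop)
    (hsymm : ∀ a b, coh a b → coh b a) (hrefl : ∀ a, coh a a)
    (x y z : Set (Set V)) (hx : IsObs coh x) (hy : IsObs coh y) (hz : IsObs coh z) :
    x ∩ y ⊆ z ↔ x ⊆ oimpl coh y z := by
  constructor
  · intro h α hα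
    refine ⟨hx.1 hα, fun β hβ hcl => ?_⟩
    refine h ⟨hx.2 _ α hα Set.subset_union_left hcl,
              hy.2 _ β hβ Set.subset_union_right hcl⟩
  · intro h α hα
    have h1 := h hα.1
    have := h1.2 α hα.2 (by rw [Set.union_self]; exact h1.1)
    rwa [Set.union_self] at this
end

section
/- For every lattice term s over a coherence graph G, the observation semantics of s equals the down-closure of the finite cliques in its disjunctive-normal-form set: ⟦s⟧ = ({x ∈ [s] | x is a finite clique})↓. -/
/-- Lattice terms over atomic observations. -/
inductive Tlat (V : Type*) where
  | atom : V → Tlat V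
  | top : Tlat V
  | bot : Tlat V
  | and : Tlat V → Tlat V → Tlat V
  | or : Tlat V → Tlat V → Tlat V

/-- Observation semantics of lattice terms. -/
def sem {V : Type*} (coh : V → V → Prop) : Tlat V → Set (Set V)
  | .atom a => dcl coh {{a}}
  | .top => Coh coh
  | .bot => ∅
  | .or s t => sem coh s ∪ sem coh t
  | .and s t => sem coh s ∩ sem coh t

/-- The DNF set-interpretation of lattice terms. -/
def brack {V : Type*} : Tlat V → Set (Set V)
  | .atom a => {{a}}
  | .top => {∅}
  | .bot => ∅
  | .or s t => brack s ∪ brack t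
  | .and s t => Set.image2 (· ∪ ·) (brack s) (brack t)

lemma clique_subset {V : Type*} {coh : V → V → Prop} {x y : Set V}
    (h : IsClique coh y) (hxy : x ⊆ y) : IsClique coh x :=
  fun a ha b hb => h a (hxy ha) b (hxy hb)

theorem sem_eq_dcl_brack {V : Type*} (coh : V → V → Prop)
    (hsymm : ∀ a b, coh a b → coh b a) (hrefl : ∀ a, coh a a)
    (s : Tlat V) :
    sem coh s = dcl coh {x ∈ brack s | x.Finite ∧ IsClique coh x} := by
  induction s with
  | atom a =>
    ext α
    constructor
    · rintro ⟨hα, β, hβ, hβα⟩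
      simp only [brack] at hβ ⊢
      rw [Set.mem_singleton_iff] at hβ
      subst hβ
      exact ⟨hα, {a}, ⟨rfl, Set.finite_singleton a, clique_subset hα hβα⟩, hβα⟩
    · rintro ⟨hα, β, ⟨hβ, _, _⟩, hβα⟩
      exact ⟨hα, β, hβ, hβα⟩
  | top =>
    ext α
    constructor
    · intro hα
      exact ⟨hα, ∅, ⟨rfl, Set.finite_empty, fun a ha => absurd ha (Set.notMem_empty a)⟩,
        Set.empty_subset α⟩
    · rintro ⟨hα, -⟩; exact hα
  | bot =>
    ext α
    simp [sem, brack, dcl]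
  | and s t ihs iht =>
    ext α
    constructor
    · rintro ⟨hs, ht⟩
      rw [ihs] at hs; rw [iht] at ht
      obtain ⟨hα, β, ⟨hβ, hβf, hβc⟩, hβα⟩ := hs
      obtain ⟨-, γ, ⟨hγ, hγf, hγc⟩, hγα⟩ := ht
      refine ⟨hα, β ∪ γ, ⟨Set.mem_image2_of_mem hβ hγ, hβf.union hγf,
        clique_subset hα (Set.union_subset hβα hγα)⟩, Set.union_subset hβα hγα⟩
    · rintro ⟨hα, x, ⟨hx, hxf, hxc⟩, hxα⟩
      obtain ⟨β, hβ, γ, hγ, rfl⟩ := hx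
      constructor
      · rw [ihs]
        exact ⟨hα, β, ⟨hβ, hxf.subset Set.subset_union_left,
          clique_subset hxc Set.subset_union_left⟩, Set.subset_union_left.trans hxα⟩
      · rw [iht]
        exact ⟨hα, γ, ⟨hγ, hxf.subset Set.subset_union_right,
          clique_subset hxc Set.subset_union_right⟩, Set.subset_union_right.trans hxα⟩
  | or s t ihs iht =>
    ext α
    constructor
    · rintro (h | h)
      · rw [ihs] at h
        obtain ⟨hα, β, ⟨hβ, hf, hc⟩, hβα⟩ := h
        exact ⟨hα, β, ⟨Or.inl hβ, hf, hc⟩, hβα⟩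
      · rw [iht] at h
        obtain ⟨hα, β, ⟨hβ, hf, hc⟩, hβα⟩ := h
        exact ⟨hα, β, ⟨Or.inr hβ, hf, hc⟩, hβα⟩
    · rintro ⟨hα, β, ⟨hβ | hβ, hf, hc⟩, hβα⟩
      · exact Or.inl (by rw [ihs]; exact ⟨hα, β, ⟨hβ, hf, hc⟩, hβα⟩)
      · exact Or.inr (by rw [iht]; exact ⟨hα, β, ⟨hβ, hf, hc⟩, hβα⟩)
end

section
/- For lattice terms s, t over a coherence graph G, ⟦s⟧ ⊆ ⟦t⟧ if and only if every finite clique in [s] contains some element of [t] as a subset. -/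
lemma mem_sem_iff {V : Type*} (coh : V → V → Prop) (t : Tlat V) (α : Set V) :
    α ∈ sem coh t ↔ IsClique coh α ∧ ∃ y ∈ brack t, y ⊆ α := by
  induction t generalizing α with
  | atom a => rfl
  | top =>
    constructor
    · exact fun h => ⟨h, ∅, rfl, Set.empty_subset _⟩
    · exact fun h => h.1
  | bot => simp [sem, brack]
  | or s t ihs iht =>
    simp only [sem, brack, Set.mem_union, ihs, iht]
    constructor
    · rintro (⟨hc, y, hy, hsub⟩ | ⟨hc, y, hy, hsub⟩)
      exacts [⟨hc, y, Or.inl hy, hsub⟩, ⟨hc, y, Or.inr hy, hsub⟩]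
    · rintro ⟨hc, y, hy | hy, hsub⟩
      exacts [Or.inl ⟨hc, y, hy, hsub⟩, Or.inr ⟨hc, y, hy, hsub⟩]
  | and s t ihs iht =>
    simp only [sem, brack, Set.mem_inter_iff, ihs, iht]
    constructor
    · rintro ⟨⟨hc, y₁, hy₁, h₁⟩, ⟨_, y₂, hy₂, h₂⟩⟩
      exact ⟨hc, y₁ ∪ y₂, Set.mem_image2_of_mem hy₁ hy₂, Set.union_subset h₁ h₂⟩
    · rintro ⟨hc, y, hy, hsub⟩
      rcases hy with ⟨y₁, hy₁, y₂, hy₂, rfl⟩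
      exact ⟨⟨hc, y₁, hy₁, (Set.subset_union_left).trans hsub⟩,
             ⟨hc, y₂, hy₂, (Set.subset_union_right).trans hsub⟩⟩

lemma brack_finite {V : Type*} (t : Tlat V) : ∀ x ∈ brack t, x.Finite := by
  induction t with
  | atom a => rintro x rfl; exact Set.finite_singleton a
  | top => rintro x rfl; exact Set.finite_empty
  | bot => rintro x hx; exact absurd hx (Set.notMem_empty x)
  | or s t ihs iht => rintro x (hx | hx); exacts [ihs x hx, iht x hx]
  | and s t ihs iht =>
    rintro x ⟨y₁, hy₁, y₂, hy₂, rfl⟩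
    exact (ihs y₁ hy₁).union (iht y₂ hy₂)

theorem sem_subset_iff_brack {V : Type*} (coh : V → V → Prop)
    (hsymm : ∀ a b, coh a b → coh b a) (hrefl : ∀ a, coh a a)
    (s t : Tlat V) :
    sem coh s ⊆ sem coh t ↔
      ∀ x ∈ brack s, x.Finite → IsClique coh x → ∃ y ∈ brack t, y ⊆ x := by
  constructor
  · intro h x hx _ hcl
    have : x ∈ sem coh s := (mem_sem_iff coh s x).2 ⟨hcl, x, hx, subset_rfl⟩
    exact ((mem_sem_iff coh t x).1 (h this)).2
  · intro h α hα
    obtain ⟨hcl, x, hx, hxα⟩ := (mem_sem_iff coh s α).1 hα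
    obtain ⟨y, hy, hyx⟩ := h x hx (brack_finite s x hx)
      (fun a ha b hb => hcl a (hxα ha) b (hxα hb))
    exact (mem_sem_iff coh t α).2 ⟨hcl, y, hy, hyx.trans hxα⟩
end

section
/- Equational completeness for observation lattices: for lattice terms s, t over a coherence graph G, ⟦s⟧ ⊆ ⟦t⟧ holds if and only if s ≤ t is derivable from the axioms of bounded distributive lattices together with the axiom a ∧ b ≡ ⊥ for each incoherent pair a, b of vertices. -/
/-- The congruence generated by the bounded distributive lattice axioms together
with `a ∧ b ≡ ⊥` for each incoherent pair `a, b`. -/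
inductive eqv {V : Type*} (coh : V → V → Prop) : Tlat V → Tlat V → Prop
  | refl (s) : eqv coh s s
  | symm {s t} : eqv coh s t → eqv coh t s
  | trans {s t u} : eqv coh s t → eqv coh t u → eqv coh s u
  | congr_or {s s' t t'} : eqv coh s s' → eqv coh t t' → eqv coh (.or s t) (.or s' t')
  | congr_and {s s' t t'} : eqv coh s s' → eqv coh t t' → eqv coh (.and s t) (.and s' t')
  | or_assoc (s t u) : eqv coh (.or s (.or t u)) (.or (.or s t) u)
  | or_comm (s t) : eqv coh (.or s t) (.or t s)
  | or_bot (s) : eqv coh (.or s .bot) s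
  | and_assoc (s t u) : eqv coh (.and s (.and t u)) (.and (.and s t) u)
  | and_comm (s t) : eqv coh (.and s t) (.and t s)
  | and_top (s) : eqv coh (.and s .top) s
  | absorb_and (s t) : eqv coh (.and s (.or s t)) s
  | absorb_or (s t) : eqv coh (.or s (.and s t)) s
  | distrib (s t u) : eqv coh (.and s (.or t u)) (.or (.and s t) (.and s u))
  | incoh (a b) : ¬ coh a b → eqv coh (.and (.atom a) (.atom b)) .bot


section Aux
open Tlat
variable {V : Type*} {coh : V → V → Prop}

/-! ### Derived equational lemmas -/

lemma eqv_bot_or (u : Tlat V) : eqv coh (.or .bot u) u :=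
  .trans (.or_comm _ _) (.or_bot u)

lemma eqv_or_self (u : Tlat V) : eqv coh (.or u u) u :=
  .trans (.congr_or (.refl _) (.symm (.and_top u))) (.absorb_or u .top)

lemma eqv_and_self (u : Tlat V) : eqv coh (.and u u) u :=
  .trans (.congr_and (.refl _) (.symm (.or_bot u))) (.absorb_and u .bot)

lemma eqv_bot_and (u : Tlat V) : eqv coh (.and .bot u) .bot :=
  .trans (.congr_and (.refl _) (.symm (eqv_bot_or u))) (.absorb_and .bot u)

lemma eqv_and_bot (u : Tlat V) : eqv coh (.and u .bot) .bot :=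
  .trans (.and_comm _ _) (eqv_bot_and u)

lemma eqv_top_and (u : Tlat V) : eqv coh (.and .top u) u :=
  .trans (.and_comm _ _) (.and_top u)

lemma eqv_top_or (u : Tlat V) : eqv coh (.or .top u) .top :=
  .trans (.congr_or (.refl _) (.symm (eqv_top_and u))) (.absorb_or .top u)

lemma eqv_or_top (u : Tlat V) : eqv coh (.or u .top) .top :=
  .trans (.or_comm _ _) (eqv_top_or u)

/-- From `x ⊓ y ≡ x` deduce `x ⊔ y ≡ y`. -/
lemma le_of_meet {x y : Tlat V} (h : eqv coh (.and x y) x) :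
    eqv coh (.or x y) y := by
  refine .trans (.or_comm _ _) ?_
  refine .trans (.congr_or (.refl y) (.symm h)) ?_
  refine .trans (.congr_or (.refl y) (.and_comm x y)) ?_
  exact .absorb_or y x

/-- Transitivity of the derivable order. -/
lemma eqvLeTrans {x y z : Tlat V} (h1 : eqv coh (.or x y) y)
    (h2 : eqv coh (.or y z) z) : eqv coh (.or x z) z := by
  refine .trans (.congr_or (.refl x) (.symm h2)) ?_
  refine .trans (.or_assoc x y z) ?_
  exact .trans (.congr_or h1 (.refl z)) h2

/-! ### Conjunctions and disjunctions of lists -/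

def conj : List V → Tlat V
  | [] => .top
  | a :: l => .and (.atom a) (conj l)

def disj : List (List V) → Tlat V
  | [] => .bot
  | C :: L => .or (conj C) (disj L)

def dnfL {V : Type*} : Tlat V → List (List V)
  | .atom a => [[a]]
  | .top => [[]]
  | .bot => []
  | .or s t => dnfL s ++ dnfL t
  | .and s t => (dnfL s).flatMap (fun C => (dnfL t).map (fun D => C ++ D))

lemma conj_append (C D : List V) :
    eqv coh (conj (C ++ D)) (.and (conj C) (conj D)) := by
  induction C with
  | nil => exact .symm (eqv_top_and (conj D))
  | cons a C ih =>
    exact .trans (.congr_and (.refl _) ih) (.and_assoc _ _ _)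

lemma disj_append (L1 L2 : List (List V)) :
    eqv coh (disj (L1 ++ L2)) (.or (disj L1) (disj L2)) := by
  induction L1 with
  | nil => exact .symm (eqv_bot_or (disj L2))
  | cons C L1 ih =>
    exact .trans (.congr_or (.refl _) ih) (.or_assoc _ _ _)

lemma distrib' (a b c : Tlat V) :
    eqv coh (.and (.or a b) c) (.or (.and a c) (.and b c)) := by
  refine .trans (.and_comm _ _) (.trans (.distrib c a b) ?_)
  exact .congr_or (.and_comm _ _) (.and_comm _ _)

lemma and_conj_disj (C : List V) (L : List (List V)) :
    eqv coh (.and (conj C) (disj L)) (disj (L.map (fun D => C ++ D))) := by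
  induction L with
  | nil => exact eqv_and_bot _
  | cons D L ih =>
    refine .trans (.distrib _ _ _) ?_
    exact .congr_or (.symm (conj_append C D)) ih

lemma and_disj_disj (L1 L2 : List (List V)) :
    eqv coh (.and (disj L1) (disj L2))
      (disj (L1.flatMap (fun C => L2.map (fun D => C ++ D)))) := by
  induction L1 with
  | nil => exact eqv_bot_and _
  | cons C L1 ih =>
    refine .trans (distrib' _ _ _) ?_
    refine .trans (.congr_or (and_conj_disj C L2) ih) ?_
    exact .symm (disj_append _ _)

lemma eqv_dnf (u : Tlat V) : eqv coh u (disj (dnfL u)) := by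
  induction u with
  | atom a =>
    exact .symm (.trans (.or_bot _) (.and_top _))
  | top => exact .symm (.or_bot _)
  | bot => exact .refl _
  | and s t ihs iht =>
    exact .trans (.congr_and ihs iht) (and_disj_disj _ _)
  | or s t ihs iht =>
    exact .trans (.congr_or ihs iht) (.symm (disj_append _ _))

lemma mem_conj {a : V} {C : List V} (h : a ∈ C) :
    eqv coh (conj C) (.and (.atom a) (conj C)) := by
  induction C with
  | nil => simp at h
  | cons c C ih =>
    rcases List.mem_cons.mp h with rfl | h
    · refine .symm (.trans (.and_assoc _ _ _) ?_)
      exact .congr_and (eqv_and_self _) (.refl _)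
    · refine .trans (.congr_and (.refl (atom c)) (ih h)) ?_
      refine .trans (.and_assoc _ _ _) ?_
      refine .trans (.congr_and (.and_comm _ _) (.refl _)) ?_
      exact .symm (.and_assoc _ _ _)

lemma mem_disj {C : List V} {L : List (List V)} (h : C ∈ L) :
    eqv coh (.or (conj C) (disj L)) (disj L) := by
  induction L with
  | nil => simp at h
  | cons D L ih =>
    rcases List.mem_cons.mp h with rfl | h
    · exact .trans (.or_assoc _ _ _) (.congr_or (eqv_or_self _) (.refl _))
    · refine .trans (.or_assoc _ _ _) ?_
      refine .trans (.congr_or (.or_comm _ _) (.refl _)) ?_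
      exact .trans (.symm (.or_assoc _ _ _)) (.congr_or (.refl _) (ih h))

lemma conj_le_of_subset {C D : List V} (h : ∀ a ∈ D, a ∈ C) :
    eqv coh (.and (conj C) (conj D)) (conj C) := by
  induction D with
  | nil => exact .and_top _
  | cons d D ih =>
    refine .trans (.and_assoc _ _ _) ?_
    refine .trans (.congr_and (.trans (.and_comm _ _)
      (.symm (mem_conj (h d (by simp))))) (.refl _)) ?_
    exact ih fun a ha => h a (by simp [ha])

lemma disj_le {L : List (List V)} {t : Tlat V}
    (h : ∀ C ∈ L, eqv coh (.or (conj C) t) t) :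
    eqv coh (.or (disj L) t) t := by
  induction L with
  | nil => exact eqv_bot_or t
  | cons C L ih =>
    refine .trans (.symm (.or_assoc _ _ _)) ?_
    refine .trans (.congr_or (.refl _) (ih fun D hD => h D (by simp [hD]))) ?_
    exact h C (by simp)

lemma incoh_conj {a b : V} {C : List V} (ha : a ∈ C) (hb : b ∈ C)
    (hab : ¬ coh a b) : eqv coh (conj C) .bot := by
  refine .trans (mem_conj ha) ?_
  refine .trans (.congr_and (.refl _) (mem_conj hb)) ?_
  refine .trans (.and_assoc _ _ _) ?_
  refine .trans (.congr_and (.incoh a b hab) (.refl _)) ?_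
  exact eqv_bot_and _

/-! ### Semantic lemmas -/

lemma sem_sub_coh (u : Tlat V) : sem coh u ⊆ Coh coh := by
  induction u with
  | atom a => intro α hα; exact hα.1
  | top => exact subset_rfl
  | bot => simp [sem]
  | and s t ihs iht => exact fun α hα => ihs hα.1
  | or s t ihs iht => exact fun α hα => hα.elim (fun h => ihs h) (fun h => iht h)

lemma sem_eq_dcl_brack_s10 (u : Tlat V) : sem coh u = dcl coh (brack u) := by
  induction u with
  | atom a => rfl
  | top =>
    ext α
    simp only [sem, brack, dcl, Coh, Set.mem_setOf_eq, Set.mem_singleton_iff]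
    exact ⟨fun h => ⟨h, ∅, rfl, Set.empty_subset α⟩, fun h => h.1⟩
  | bot =>
    ext α; simp [sem, brack, dcl]
  | and s t ihs iht =>
    ext α
    simp only [sem, brack, dcl, Set.mem_inter_iff, Set.mem_setOf_eq, ihs, iht,
      Set.mem_image2]
    constructor
    · rintro ⟨⟨hcl, β, hβ, hβα⟩, ⟨-, γ, hγ, hγα⟩⟩
      exact ⟨hcl, β ∪ γ, ⟨β, hβ, γ, hγ, rfl⟩, Set.union_subset hβα hγα⟩
    · rintro ⟨hcl, -, ⟨β, hβ, γ, hγ, rfl⟩, hsub⟩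
      exact ⟨⟨hcl, β, hβ, (Set.union_subset_iff.mp hsub).1⟩,
        ⟨hcl, γ, hγ, (Set.union_subset_iff.mp hsub).2⟩⟩
  | or s t ihs iht =>
    ext α
    simp only [sem, dcl, brack, Set.mem_union, Set.mem_setOf_eq, ihs, iht]
    constructor
    · rintro (⟨hcl, β, hβ, hβα⟩ | ⟨hcl, β, hβ, hβα⟩)
      · exact ⟨hcl, β, Or.inl hβ, hβα⟩
      · exact ⟨hcl, β, Or.inr hβ, hβα⟩
    · rintro ⟨hcl, β, hβ | hβ, hβα⟩
      · exact Or.inl ⟨hcl, β, hβ, hβα⟩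
      · exact Or.inr ⟨hcl, β, hβ, hβα⟩

lemma brack_dnf (u : Tlat V) :
    brack u = {x | ∃ C ∈ dnfL u, x = {a | a ∈ C}} := by
  induction u with
  | atom a =>
    ext x; simp only [brack, dnfL, Set.mem_singleton_iff, Set.mem_setOf_eq,
      List.mem_singleton]
    constructor
    · rintro rfl; exact ⟨[a], rfl, by ext b; simp⟩
    · rintro ⟨C, rfl, rfl⟩; ext b; simp
  | top =>
    ext x; simp only [brack, dnfL, Set.mem_singleton_iff, Set.mem_setOf_eq,
      List.mem_singleton]
    constructor
    · rintro rfl; exact ⟨[], rfl, by ext b; simp⟩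
    · rintro ⟨C, rfl, rfl⟩; ext b; simp
  | bot => ext x; simp [brack, dnfL]
  | and s t ihs iht =>
    ext x
    simp only [brack, dnfL, Set.mem_image2, ihs, iht, Set.mem_setOf_eq,
      List.mem_flatMap, List.mem_map]
    constructor
    · rintro ⟨y, ⟨C, hC, rfl⟩, z, ⟨D, hD, rfl⟩, rfl⟩
      refine ⟨C ++ D, ⟨C, hC, D, hD, rfl⟩, ?_⟩
      ext b; simp
    · rintro ⟨E, ⟨C, hC, D, hD, rfl⟩, rfl⟩
      refine ⟨{a | a ∈ C}, ⟨C, hC, rfl⟩, {a | a ∈ D}, ⟨D, hD, rfl⟩, ?_⟩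
      ext b; simp
  | or s t ihs iht =>
    ext x
    simp only [brack, dnfL, Set.mem_union, ihs, iht, Set.mem_setOf_eq,
      List.mem_append]
    constructor
    · rintro (⟨C, hC, rfl⟩ | ⟨C, hC, rfl⟩)
      · exact ⟨C, Or.inl hC, rfl⟩
      · exact ⟨C, Or.inr hC, rfl⟩
    · rintro ⟨C, hC | hC, rfl⟩
      · exact Or.inl ⟨C, hC, rfl⟩
      · exact Or.inr ⟨C, hC, rfl⟩

/-- Soundness: equivalent terms have equal semantics. -/
lemma sem_sound {u v : Tlat V} (h : eqv coh u v) : sem coh u = sem coh v := by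
  induction h with
  | refl s => rfl
  | symm _ ih => exact ih.symm
  | trans _ _ ih1 ih2 => exact ih1.trans ih2
  | congr_or _ _ ih1 ih2 => simp only [sem, ih1, ih2]
  | congr_and _ _ ih1 ih2 => simp only [sem, ih1, ih2]
  | or_assoc s t u => simp only [sem, Set.union_assoc]
  | or_comm s t => simp only [sem, Set.union_comm]
  | or_bot s => simp [sem]
  | and_assoc s t u => simp only [sem, Set.inter_assoc]
  | and_comm s t => simp only [sem, Set.inter_comm]
  | and_top s => simpa [sem] using Set.inter_eq_left.mpr (sem_sub_coh s)
  | absorb_and s t =>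
      ext α; simp only [sem, Set.mem_inter_iff, Set.mem_union]; tauto
  | absorb_or s t =>
      ext α; simp only [sem, Set.mem_inter_iff, Set.mem_union]; tauto
  | distrib s t u =>
      ext α; simp only [sem, Set.mem_inter_iff, Set.mem_union]; tauto
  | incoh a b hab =>
      ext α
      simp only [sem, dcl, Set.mem_inter_iff, Set.mem_setOf_eq,
        Set.mem_singleton_iff, Set.mem_empty_iff_false, iff_false]
      rintro ⟨⟨hcl, β, rfl, hβα⟩, ⟨-, γ, rfl, hγα⟩⟩
      exact hab (hcl a (hβα rfl) b (hγα rfl))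

end Aux

theorem obs_lattice_completeness {V : Type*} (coh : V → V → Prop)
    (hsymm : ∀ a b, coh a b → coh b a) (hrefl : ∀ a, coh a a)
    (s t : Tlat V) :
    sem coh s ⊆ sem coh t ↔ eqv coh (.or s t) t := by
  constructor
  · intro hsub
    refine .trans (.congr_or (eqv_dnf s) (.refl t)) (disj_le fun C hC => ?_)
    by_cases hcl : ∀ a ∈ C, ∀ b ∈ C, coh a b
    · have hx : ({a | a ∈ C} : Set V) ∈ sem coh s := by
        rw [sem_eq_dcl_brack_s10]
        refine ⟨fun a ha b hb => hcl a ha b hb, {a | a ∈ C}, ?_, subset_rfl⟩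
        rw [brack_dnf]; exact ⟨C, hC, rfl⟩
      have hy := hsub hx
      rw [sem_eq_dcl_brack_s10, brack_dnf] at hy
      obtain ⟨-, γ, ⟨D, hD, rfl⟩, hsubγ⟩ := hy
      have h1 : eqv coh (.and (conj C) (conj D)) (conj C) :=
        conj_le_of_subset fun a ha => hsubγ ha
      refine eqvLeTrans (le_of_meet h1) ?_
      refine .trans (.congr_or (.refl _) (eqv_dnf t)) ?_
      exact .trans (mem_disj hD) (.symm (eqv_dnf t))
    · push_neg at hcl
      obtain ⟨a, ha, b, hb, hab⟩ := hcl
      exact .trans (.congr_or (incoh_conj ha hb hab) (.refl t)) (eqv_bot_or t)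
  · intro h
    have := sem_sound h
    simp only [sem] at this
    rw [← this]
    exact Set.subset_union_left
end

section
/- In the observation algebra over a coherence graph, implication out of (the observation generated by) a single clique distributes over disjunction: ({α}↓ → (x ∪ y)) = ({α}↓ → x) ∪ ({α}↓ → y) for any clique α and observations x, y. -/
theorem impl_singleton_distrib_union {V : Type*} (coh : V → V → Prop)
    (hsymm : ∀ a b, coh a b → coh b a) (hrefl : ∀ a, coh a a)
    (α : Set V) (hα : IsClique coh α)
    (x y : Set (Set V)) (hx : IsObs coh x) (hy : IsObs coh y) :
    oimpl coh (dcl coh {α}) (x ∪ y) =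
      oimpl coh (dcl coh {α}) x ∪ oimpl coh (dcl coh {α}) y := by
  ext γ
  constructor
  · rintro ⟨hγ, h⟩
    by_cases hcl : IsClique coh (γ ∪ α)
    · have hαd : α ∈ dcl coh {α} := ⟨hα, α, rfl, subset_rfl⟩
      have hmem := h α hαd hcl
      -- For any β ∈ dcl {α}, γ ∪ α ⊆ γ ∪ β
      have key : ∀ (z : Set (Set V)), IsObs coh z → γ ∪ α ∈ z →
          γ ∈ oimpl coh (dcl coh {α}) z := by
        intro z hz hmz
        refine ⟨hγ, ?_⟩
        rintro β ⟨hβ, δ, hδ, hsub⟩ hclβ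
        rcases hδ with rfl
        exact hz.2 (γ ∪ β) (γ ∪ δ) hmz (Set.union_subset_union_right γ hsub) hclβ
      rcases hmem with hmx | hmy
      · exact Or.inl (key x hx hmx)
      · exact Or.inr (key y hy hmy)
    · -- vacuous: any clique β ⊇ α with γ ∪ β clique would make γ ∪ α a clique
      refine Or.inl ⟨hγ, ?_⟩
      rintro β ⟨hβ, δ, hδ, hsub⟩ hclβ
      rcases hδ with rfl
      exact absurd (fun a ha b hb => hclβ a
        (ha.elim Or.inl (fun h' => Or.inr (hsub h'))) b
        (hb.elim Or.inl (fun h' => Or.inr (hsub h')))) hcl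
  · rintro (⟨hγ, h⟩ | ⟨hγ, h⟩)
    · exact ⟨hγ, fun β hβ hcl => Or.inl (h β hβ hcl)⟩
    · exact ⟨hγ, fun β hβ hcl => Or.inr (h β hβ hcl)⟩
end

section
/- In a graph with the finite anti-neighbourhood property, for any finite clique α, the pseudocomplement of {α}↓ equals the down-closure of the set of singleton cliques {a} where a is incoherent with some element of α: ({α}↓ → ∅) = ({{a} | ∃b ∈ α, ¬(a coh b)})↓. -/
theorem fan_pseudocomplement_clique {V : Type*} (coh : V → V → Prop)
    (hsymm : ∀ a b, coh a b → coh b a) (hrefl : ∀ a, coh a a)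
    (hfan : ∀ a : V, {b : V | ¬ coh a b}.Finite)
    (α : Set V) (hα : IsClique coh α) (hfin : α.Finite) :
    oimpl coh (dcl coh {α}) ∅ =
      dcl coh {s : Set V | ∃ a : V, s = {a} ∧ ∃ b ∈ α, ¬ coh a b} := by
  ext γ
  constructor
  · rintro ⟨hγ, h⟩
    have hαmem : α ∈ dcl coh {α} := ⟨hα, α, rfl, subset_refl α⟩
    have hnc : ¬ IsClique coh (γ ∪ α) := fun hc => (h α hαmem hc)
    simp only [IsClique, not_forall] at hnc
    obtain ⟨a, ha, b, hb, hab⟩ := hnc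
    refine ⟨hγ, ?_⟩
    rcases ha with ha | ha <;> rcases hb with hb | hb
    · exact absurd (hγ a ha b hb) hab
    · exact ⟨{a}, ⟨a, rfl, b, hb, hab⟩, Set.singleton_subset_iff.2 ha⟩
    · exact ⟨{b}, ⟨b, rfl, a, ha, fun h => hab (hsymm _ _ h)⟩,
        Set.singleton_subset_iff.2 hb⟩
    · exact absurd (hα a ha b hb) hab
  · rintro ⟨hγ, s, ⟨a, rfl, b, hb, hab⟩, hs⟩
    refine ⟨hγ, ?_⟩
    rintro β ⟨hβ, β', rfl, hβ'⟩ hc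
    exact absurd (hc a (Or.inl (hs rfl)) b (Or.inr (hβ' hb))) hab
end

section
/- In the infinite anticlique graph Ω, for any nonempty set A ⊆ ω, the double pseudocomplement of x := {{a} | a ∈ A} satisfies (x → ∅) → ∅ = x provided A is also not all of ω; in particular double negation is the identity on nontrivial singleton-generated observations. -/
lemma neg_singletons {V : Type*} (B : Set V) (hB : B.Nonempty) :
    oimpl (· = · : V → V → Prop) {s : Set V | ∃ a ∈ B, s = {a}} ∅ =
      {s : Set V | ∃ a ∈ Bᶜ, s = {a}} := by
  ext α
  constructor
  · rintro ⟨hcl, h⟩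
    obtain ⟨v, hv⟩ : α.Nonempty := by
      by_contra hne
      rw [Set.not_nonempty_iff_eq_empty] at hne
      obtain ⟨a, ha⟩ := hB
      refine Set.notMem_empty _ (h {a} ⟨a, ha, rfl⟩ ?_)
      subst hne
      intro x hx y hy
      simp at hx hy; subst hx; subst hy; rfl
    have hα : α = {v} := by
      apply Set.eq_singleton_iff_unique_mem.mpr
      exact ⟨hv, fun x hx => hcl x hx v hv⟩
    refine ⟨v, ?_, hα⟩
    intro hvB
    refine Set.notMem_empty _ (h {v} ⟨v, hvB, rfl⟩ ?_)
    intro x hx y hy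
    rw [hα] at hx hy; simp at hx hy; subst hx; subst hy; rfl
  · rintro ⟨v, hv, rfl⟩
    refine ⟨by intro x hx y hy; simp at hx hy; subst hx; subst hy; rfl, ?_⟩
    rintro β ⟨a, ha, rfl⟩ hcl
    exact absurd (hcl v (by simp) a (by simp)) (by rintro rfl; exact hv ha)

theorem anticlique_double_negation {V : Type*} [Infinite V]
    (A : Set V) (hA : A.Nonempty) (hA' : A ≠ Set.univ) :
    oimpl (· = · : V → V → Prop)
        (oimpl (· = ·) {s : Set V | ∃ a ∈ A, s = {a}} ∅) ∅ =
      {s : Set V | ∃ a ∈ A, s = {a}} := by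
  have hBc : Aᶜ.Nonempty := Set.nonempty_compl.mpr hA'
  rw [neg_singletons A hA, neg_singletons Aᶜ hBc, compl_compl]
end

section
/- In the graph with vertices ℕ × {0,1} where (n,i) and (m,j) are coherent iff i = j or n ≠ m, the finitary pseudocomplement of the observation x = {{(n,0)} | n ∈ ℕ} (computed within finite cliques) is empty, while its pseudocomplement in the full observation algebra is the down-closure of the single infinite clique {(n,1) | n ∈ ℕ}; hence the embedding of finitary observations into observations does not preserve pseudocomplements. -/
/-- Finite cliques. -/
def Cohf {V : Type*} (coh : V → V → Prop) : Set (Set V) :=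
  {x | IsClique coh x ∧ x.Finite}

/-- Down-closure within finite cliques. -/
def dclf {V : Type*} (coh : V → V → Prop) (x : Set (Set V)) : Set (Set V) :=
  {α | α ∈ Cohf coh ∧ ∃ β ∈ x, β ⊆ α}

/-- Finitary observation: a down-closed set of finite cliques. -/
def IsObsf {V : Type*} (coh : V → V → Prop) (x : Set (Set V)) : Prop :=
  x ⊆ Cohf coh ∧ ∀ α β : Set V, β ∈ x → β ⊆ α → α ∈ Cohf coh → α ∈ x

/-- Finitary Heyting implication. -/
def oimplf {V : Type*} (coh : V → V → Prop) (x y : Set (Set V)) : Set (Set V) :=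
  {α | α ∈ Cohf coh ∧ ∀ β ∈ x, α ∪ β ∈ Cohf coh → α ∪ β ∈ y}

/-- The graph on `ℕ × Bool` where `(n,i)` and `(m,j)` are coherent iff `i = j` or `n ≠ m`. -/
def cohG : ℕ × Bool → ℕ × Bool → Prop :=
  fun p q => p.2 = q.2 ∨ p.1 ≠ q.1

theorem finitary_pseudocomplement_not_preserved :
    oimplf cohG {s : Set (ℕ × Bool) | ∃ n : ℕ, s = {(n, false)}} ∅ = ∅ ∧
    oimpl cohG {s : Set (ℕ × Bool) | ∃ n : ℕ, s = {(n, false)}} ∅ =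
      dcl cohG {{p : ℕ × Bool | p.2 = true}} ∧
    dcl cohG (oimplf cohG {s : Set (ℕ × Bool) | ∃ n : ℕ, s = {(n, false)}} ∅) ≠
      oimpl cohG {s : Set (ℕ × Bool) | ∃ n : ℕ, s = {(n, false)}} ∅ := by

  have h1 : oimplf cohG {s : Set (ℕ × Bool) | ∃ n : ℕ, s = {(n, false)}} ∅ = ∅ := by
    ext α
    simp only [oimplf, Set.mem_setOf_eq, Set.mem_empty_iff_false, iff_false, not_and]
    rintro ⟨hcl, hfin⟩ h
    obtain ⟨n, hn⟩ : ∃ n : ℕ, n ∉ Prod.fst '' α := (hfin.image Prod.fst).exists_notMem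
    have hn' : ∀ b, (n, b) ∉ α := fun b hb => hn ⟨(n, b), hb, rfl⟩
    refine h {(n, false)} ⟨n, rfl⟩ ⟨?_, hfin.union (Set.finite_singleton _)⟩
    rintro a (ha | ha) b (hb | hb)
    · exact hcl a ha b hb
    · simp only [Set.mem_singleton_iff] at hb; subst hb
      exact Or.inr (fun he => hn' a.2 (by rw [show n = a.1 from he.symm, Prod.mk.eta]; exact ha))
    · simp only [Set.mem_singleton_iff] at ha; subst ha
      exact Or.inr (fun he => hn' b.2 (by rw [show n = b.1 from he, Prod.mk.eta]; exact hb))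
    · simp only [Set.mem_singleton_iff] at ha hb; subst ha; subst hb; exact Or.inl rfl
  have h2 : oimpl cohG {s : Set (ℕ × Bool) | ∃ n : ℕ, s = {(n, false)}} ∅ =
      dcl cohG {{p : ℕ × Bool | p.2 = true}} := by
    ext α
    constructor
    · rintro ⟨hcl, h⟩
      refine ⟨hcl, {p : ℕ × Bool | p.2 = true}, rfl, ?_⟩
      rintro ⟨m, b⟩ hb
      simp only [Set.mem_setOf_eq] at hb; subst hb
      by_contra hmem
      refine h {(m, false)} ⟨m, rfl⟩ ?_
      rintro a (ha | ha) b (hb | hb)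
      · exact hcl a ha b hb
      · simp only [Set.mem_singleton_iff] at hb; subst hb
        by_cases he : a.1 = m
        · cases hba : a.2 with
          | false => exact Or.inl hba
          | true => exact absurd (by rw [← he, ← hba, Prod.mk.eta]; exact ha) hmem
        · exact Or.inr he
      · simp only [Set.mem_singleton_iff] at ha; subst ha
        by_cases he : b.1 = m
        · cases hbb : b.2 with
          | false => exact Or.inl hbb.symm
          | true => exact absurd (by rw [← he, ← hbb, Prod.mk.eta]; exact hb) hmem
        · exact Or.inr (fun hc => he hc.symm)
      · simp only [Set.mem_singleton_iff] at ha hb; subst ha; subst hb; exact Or.inl rfl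
    · rintro ⟨hcl, β, hβ, hsub⟩
      simp only [Set.mem_singleton_iff] at hβ; subst hβ
      refine ⟨hcl, ?_⟩
      rintro γ ⟨n, rfl⟩ hclu
      have h1 : ((n, true) : ℕ × Bool) ∈ α ∪ {(n, false)} := Or.inl (hsub rfl)
      have h2 : ((n, false) : ℕ × Bool) ∈ α ∪ {(n, false)} := Or.inr rfl
      have := hclu _ h1 _ h2
      simp [cohG] at this
  refine ⟨h1, h2, ?_⟩
  rw [h1, h2]
  intro h
  have hmem : {p : ℕ × Bool | p.2 = true} ∈ dcl cohG {{p : ℕ × Bool | p.2 = true}} := by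
    refine ⟨?_, {p : ℕ × Bool | p.2 = true}, rfl, subset_rfl⟩
    intro a ha b hb
    exact Or.inl (ha.trans hb.symm)
  rw [← h] at hmem
  obtain ⟨-, β, hβ, -⟩ := hmem
  exact hβ
end
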